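/- Let a_1,…,a_n be positive integers with total sum Σ = a_1 + ⋯ + a_n, and let M ≤ Σ be a natural number. Consider the extended indexed family consisting of a_1,…,a_n together with the two numbers x = M+1 and y = Σ+1−M (total sum 2Σ+2). Then: (i) there is a subset S ⊆ {1,…,n} with Σ_{i∈S} a_i = M if and only if the extended family has a subfamily of sum Σ+1 (equivalently, can be split into two parts of equal sum); and (ii) S ↦ S ∪ {y} is a bijection between {S ⊆ {1,…,n} : Σ_{i∈S} a_i = M} and the subfamilies of the extended family that have sum Σ+1 and contain y. -/

import Mathlib

open Sum Finset

lemma bool_finset_cases (u : Finset Bool) :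
    u = ∅ ∨ u = {false} ∨ u = {true} ∨ u = {false, true} := by
  revert u; decide

lemma sum_decomp {n : ℕ} (f : Fin n ⊕ Bool → ℕ) (T : Finset (Fin n ⊕ Bool)) :
    ∑ x ∈ T, f x = ∑ i ∈ T.toLeft, f (inl i) + ∑ b ∈ T.toRight, f (inr b) := by
  conv_lhs => rw [← Finset.toLeft_disjSum_toRight (u := T)]
  rw [Finset.sum_disjSum]

/-- the Subset-Sum-to-Partition reduction. With `Σ = a_1 + ⋯ + a_n`,
`M ≤ Σ`, and the extended family consisting of the `a_i` together with `x = M+1`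
(index `Sum.inr false`) and `y = Σ+1−M` (index `Sum.inr true`):
(i) some subset of the `a_i` sums to `M` iff some subfamily of the extended family sums
to `Σ+1`; and (ii) `S ↦ S ∪ {y}` is a bijection between `{S : ∑_{i∈S} a i = M}` and the
subfamilies of sum `Σ+1` containing `y`. -/
theorem stmt_10 {n : ℕ} (a : Fin n → ℕ) (ha : ∀ i, 0 < a i) (M : ℕ)
    (hM : M ≤ ∑ i, a i) :
    ((∃ S : Finset (Fin n), ∑ i ∈ S, a i = M) ↔
      (∃ T : Finset (Fin n ⊕ Bool),
        ∑ x ∈ T, Sum.elim a (fun b => if b then (∑ i, a i) + 1 - M else M + 1) x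
          = (∑ i, a i) + 1)) ∧
    Set.BijOn
      (fun S : Finset (Fin n) =>
        S.image Sum.inl ∪ ({Sum.inr true} : Finset (Fin n ⊕ Bool)))
      {S : Finset (Fin n) | ∑ i ∈ S, a i = M}
      {T : Finset (Fin n ⊕ Bool) |
        (∑ x ∈ T, Sum.elim a (fun b => if b then (∑ i, a i) + 1 - M else M + 1) x
          = (∑ i, a i) + 1) ∧ Sum.inr true ∈ T} := by
  set Sg := ∑ i, a i with hSg
  set f : Fin n ⊕ Bool → ℕ :=
    Sum.elim a (fun b => if b then Sg + 1 - M else M + 1) with hf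
  have hft : f (inr true) = Sg + 1 - M := by simp [hf]
  have hff : f (inr false) = M + 1 := by simp [hf]
  have hfl : ∀ i, f (inl i) = a i := fun i => rfl
  -- key sum computation for images
  have himg : ∀ S : Finset (Fin n),
      ∑ x ∈ S.image inl ∪ {inr true}, f x = ∑ i ∈ S, a i + (Sg + 1 - M) := by
    intro S
    rw [Finset.sum_union (by simp), Finset.sum_image (fun _ _ _ _ h => inl.inj h)]
    simp [hft, hfl]
  have hsumle : ∀ S : Finset (Fin n), ∑ i ∈ S, a i ≤ Sg := fun S =>
    Finset.sum_le_sum_of_subset (Finset.subset_univ S)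
  -- maps to
  have hmaps : Set.MapsTo
      (fun S : Finset (Fin n) => S.image inl ∪ ({inr true} : Finset (Fin n ⊕ Bool)))
      {S : Finset (Fin n) | ∑ i ∈ S, a i = M}
      {T : Finset (Fin n ⊕ Bool) | (∑ x ∈ T, f x = Sg + 1) ∧ inr true ∈ T} := by
    intro S hS
    refine ⟨?_, by simp⟩
    rw [himg S, hS]
    omega
  -- surjectivity analysis
  have hsurj : ∀ T : Finset (Fin n ⊕ Bool),
      (∑ x ∈ T, f x = Sg + 1) → inr true ∈ T →
      ∑ i ∈ T.toLeft, a i = M ∧ T.toLeft.image inl ∪ {inr true} = T := by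
    intro T hT htrue
    have hd := sum_decomp f T
    have hmt : true ∈ T.toRight := by simpa using htrue
    have hfnot : inr false ∉ T := by
      intro hfmem
      have hmf : false ∈ T.toRight := by simpa using hfmem
      have : T.toRight = {false, true} := by
        rcases bool_finset_cases T.toRight with h | h | h | h <;> simp [h] at hmf hmt ⊢
      rw [this] at hd
      simp only [hfl] at hd
      rw [show (∑ b ∈ ({false, true} : Finset Bool), f (inr b)) = (M + 1) + (Sg + 1 - M) by
        simp [hff, hft]] at hd
      omega
    have hright : T.toRight = {true} := by
      have hmf : false ∉ T.toRight := by simpa using hfnot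
      rcases bool_finset_cases T.toRight with h | h | h | h <;> simp [h] at hmf hmt ⊢
    rw [hright] at hd
    simp only [hfl, Finset.sum_singleton, hft] at hd
    have hsum : ∑ i ∈ T.toLeft, a i = M := by
      have := hsumle T.toLeft; omega
    refine ⟨hsum, ?_⟩
    ext x
    cases x with
    | inl i => simp [Finset.mem_toLeft]
    | inr b =>
      cases b <;> simp [htrue, hfnot]
  constructor
  · constructor
    · rintro ⟨S, hS⟩
      exact ⟨S.image inl ∪ {inr true}, (hmaps hS).1⟩
    · rintro ⟨T, hT⟩
      by_cases htrue : inr true ∈ T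
      · exact ⟨T.toLeft, (hsurj T hT htrue).1⟩
      · have hd := sum_decomp f T
        have hmt : true ∉ T.toRight := by simpa using htrue
        by_cases hfalse : inr false ∈ T
        · have hmf : false ∈ T.toRight := by simpa using hfalse
          have hright : T.toRight = {false} := by
            rcases bool_finset_cases T.toRight with h | h | h | h <;>
              simp [h] at hmf hmt ⊢
          rw [hright] at hd
          simp only [hfl, Finset.sum_singleton, hff] at hd
          refine ⟨T.toLeftᶜ, ?_⟩
          have := Finset.sum_compl_add_sum T.toLeft a
          omega
        · have hmf : false ∉ T.toRight := by simpa using hfalse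
          have hright : T.toRight = ∅ := by
            rcases bool_finset_cases T.toRight with h | h | h | h <;>
              simp [h] at hmf hmt ⊢
          rw [hright] at hd
          simp only [hfl, Finset.sum_empty, add_zero] at hd
          have := hsumle T.toLeft
          omega
  · refine ⟨hmaps, ?_, ?_⟩
    · intro S1 _ S2 _ heq
      ext i
      have := Finset.ext_iff.mp heq (inl i)
      simpa using this
    · intro T hT
      obtain ⟨hsum, himgeq⟩ := hsurj T hT.1 hT.2
      exact ⟨T.toLeft, hsum, himgeq⟩
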